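/- Let ψ : ℝⁿ → ℝ ∪ {+∞} be convex, proper, and closed, f : ℝⁿ → ℝ differentiable, and let H be a symmetric matrix satisfying dᵀHd ≥ σ‖d‖² for all d, with σ > 0. If d satisfies the inexactness condition Q(d) ≤ (1 − η)Q* for some η ∈ [0,1), where Q(d) = ∇f(x)ᵀd + (1/2)dᵀHd + ψ(x+d) − ψ(x) and Q* = inf Q, then Δ = ∇f(x)ᵀd + ψ(x+d) − ψ(x) satisfies Δ ≤ −(1/(1 + √η))·dᵀHd ≤ −(σ/(1 + √η))·‖d‖². -/

import Mathlib

/-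
Setting: minimize F = f + ψ over ℝⁿ (modeled as `EuclideanSpace ℝ (Fin n)`), where
f : ℝⁿ → ℝ is smooth and ψ : ℝⁿ → ℝ ∪ {+∞} (modeled as `EReal`-valued, never ⊥)
is convex, proper and closed.  The quadratic model at x with symmetric operator H is
Q(d) = ⟪∇f(x), d⟫ + (1/2)⟪H d, d⟫ + ψ(x+d) − ψ(x), and Δ(d) = ⟪∇f(x), d⟫ + ψ(x+d) − ψ(x).
-/

open scoped RealInnerProductSpace
open Set Filter Topology

noncomputable section

/-- Convexity for extended-real-valued functions (values in ℝ ∪ {±∞}). -/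
def ConvexE {n : ℕ} (g : EuclideanSpace ℝ (Fin n) → EReal) : Prop :=
  ∀ x y : EuclideanSpace ℝ (Fin n), ∀ a b : ℝ, 0 ≤ a → 0 ≤ b → a + b = 1 →
    g (a • x + b • y) ≤ (a : EReal) * g x + (b : EReal) * g y

/-- ψ is proper: it never takes the value −∞ (its values lie in ℝ ∪ {+∞})
and it is finite somewhere. -/
def ProperPsi {n : ℕ} (ψ : EuclideanSpace ℝ (Fin n) → EReal) : Prop :=
  (∀ x, ψ x ≠ ⊥) ∧ ∃ x, ψ x ≠ ⊤

/-- ψ is closed, i.e. lower semicontinuous. -/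
def ClosedPsi {n : ℕ} (ψ : EuclideanSpace ℝ (Fin n) → EReal) : Prop :=
  LowerSemicontinuous ψ

/-- H is a symmetric (self-adjoint) linear operator. -/
def SymmCLM {n : ℕ} (H : EuclideanSpace ℝ (Fin n) →L[ℝ] EuclideanSpace ℝ (Fin n)) : Prop :=
  ∀ u v, ⟪H u, v⟫ = ⟪u, H v⟫

/-- m is the smallest eigenvalue of the symmetric operator H
(characterized as the minimum of the Rayleigh quotient over the unit sphere). -/
def IsSmallestEigenvalue {n : ℕ} (H : EuclideanSpace ℝ (Fin n) →L[ℝ] EuclideanSpace ℝ (Fin n))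
    (m : ℝ) : Prop :=
  IsLeast {r : ℝ | ∃ u : EuclideanSpace ℝ (Fin n), ‖u‖ = 1 ∧ r = ⟪H u, u⟫} m

/-- The objective F = f + ψ (extended-real-valued). -/
def Fm {n : ℕ} (f : EuclideanSpace ℝ (Fin n) → ℝ) (ψ : EuclideanSpace ℝ (Fin n) → EReal)
    (x : EuclideanSpace ℝ (Fin n)) : EReal :=
  (f x : EReal) + ψ x

/-- The quadratic model Q(d) = ∇f(x)ᵀd + (1/2)dᵀHd + ψ(x+d) − ψ(x). -/
def Qm {n : ℕ} (f : EuclideanSpace ℝ (Fin n) → ℝ) (ψ : EuclideanSpace ℝ (Fin n) → EReal)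
    (H : EuclideanSpace ℝ (Fin n) →L[ℝ] EuclideanSpace ℝ (Fin n))
    (x d : EuclideanSpace ℝ (Fin n)) : EReal :=
  ((⟪gradient f x, d⟫ + 1 / 2 * ⟪H d, d⟫ : ℝ) : EReal) + ψ (x + d) - ψ x

/-- Δ(d) = ∇f(x)ᵀd + ψ(x+d) − ψ(x). -/
def Dm {n : ℕ} (f : EuclideanSpace ℝ (Fin n) → ℝ) (ψ : EuclideanSpace ℝ (Fin n) → EReal)
    (x d : EuclideanSpace ℝ (Fin n)) : EReal :=
  ((⟪gradient f x, d⟫ : ℝ) : EReal) + ψ (x + d) - ψ x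

/-- g is σ-strongly convex: g − (σ/2)‖·‖² is convex. -/
def StrongConvexE {n : ℕ} (σ : ℝ) (g : EuclideanSpace ℝ (Fin n) → EReal) : Prop :=
  ConvexE (fun d => g d - ((σ / 2 * ‖d‖ ^ 2 : ℝ) : EReal))

/-- The solution set Ω = argmin F. -/
def SolSet {n : ℕ} (f : EuclideanSpace ℝ (Fin n) → ℝ)
    (ψ : EuclideanSpace ℝ (Fin n) → EReal) : Set (EuclideanSpace ℝ (Fin n)) :=
  {y | ∀ z, Fm f ψ y ≤ Fm f ψ z}

-- auxiliary helpers

lemma form_ne_bot (r p : ℝ) (z : EReal) (hz : z ≠ ⊥) : (r : EReal) + z - (p : EReal) ≠ ⊥ := by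
  induction z using EReal.rec with
  | bot => exact absurd rfl hz
  | coe q =>
      rw [← EReal.coe_add, ← EReal.coe_sub]
      exact EReal.coe_ne_bot _
  | top => simp [EReal.coe_add_top, EReal.top_sub_coe]

lemma form_top (r p : ℝ) : (r : EReal) + ⊤ - (p : EReal) = ⊤ := by
  rw [EReal.coe_add_top, EReal.top_sub_coe]

lemma real_core (D a η : ℝ) (ha : 0 ≤ a) (hη0 : 0 ≤ η) (hη1 : η < 1)
    (hkey : ∀ t : ℝ, 0 ≤ t → t ≤ 1 → D + a / 2 ≤ (1 - η) * (t * D + t ^ 2 * (a / 2))) :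
    D ≤ -(1 / (1 + Real.sqrt η)) * a := by
  set s := Real.sqrt η with hs
  have hs0 : 0 ≤ s := Real.sqrt_nonneg η
  have hs1 : s < 1 := by
    rw [hs, show (1:ℝ) = Real.sqrt 1 by simp]
    exact Real.sqrt_lt_sqrt hη0 hη1
  have hs2 : s ^ 2 = η := Real.sq_sqrt hη0
  have h1s : (0:ℝ) < 1 + s := by linarith
  have h0 := hkey 0 le_rfl zero_le_one
  norm_num at h0
  have hD0 : D ≤ -a / 2 := by nlinarith
  rcases eq_or_lt_of_le ha with hae | hap
  · -- a = 0
    rw [← hae]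
    nlinarith
  · rcases le_or_gt D (-a) with hc | hc
    · -- trivial case
      have : (1 / (1 + s)) * a ≤ 1 * a := by
        apply mul_le_mul_of_nonneg_right _ ha
        rw [div_le_one h1s]; linarith
      nlinarith
    · -- main case: use t = -D/a
      have ht0 : 0 ≤ -D / a := by
        apply div_nonneg _ ha
        nlinarith
      have ht1 : -D / a ≤ 1 := by
        rw [div_le_one hap]; linarith
      have h := hkey (-D / a) ht0 ht1
      have hsimp : (-D / a) * D + (-D / a) ^ 2 * (a / 2) = -(D ^ 2) / (2 * a) := by
        field_simp; ring
      rw [hsimp] at h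
      have hpoly : (1 - η) * D ^ 2 + 2 * a * D + a ^ 2 ≤ 0 := by
        have h2 : (D + a / 2) * (2 * a) ≤ ((1 - η) * (-(D ^ 2) / (2 * a))) * (2 * a) :=
          mul_le_mul_of_nonneg_right h (by positivity)
        have h3 : ((1 - η) * (-(D ^ 2) / (2 * a))) * (2 * a) = -((1 - η) * D ^ 2) := by
          field_simp
        rw [h3] at h2
        nlinarith
      have hRpos : 0 < (1 - s) * D + a := by nlinarith [mul_pos (by linarith : (0:ℝ) < 1 - s) (by linarith : (0:ℝ) < a + D), mul_nonneg hs0 hap.le]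
      have hP : (1 + s) * D + a ≤ 0 := by nlinarith [hpoly, hRpos, hs2]
      rw [neg_mul, le_neg, one_div, ← div_eq_inv_mul, div_le_iff₀ h1s]
      nlinarith [hP]


/-- If dᵀHd ≥ σ‖d‖² for all d with σ > 0 and d satisfies Q(d) ≤ (1 − η)Q*
for some η ∈ [0,1), then Δ ≤ −(1/(1+√η))·dᵀHd ≤ −(σ/(1+√η))·‖d‖². -/
theorem Delta_bound_of_inexact_posdef {n : ℕ}
    (f : EuclideanSpace ℝ (Fin n) → ℝ) (ψ : EuclideanSpace ℝ (Fin n) → EReal)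
    (H : EuclideanSpace ℝ (Fin n) →L[ℝ] EuclideanSpace ℝ (Fin n))
    (x d : EuclideanSpace ℝ (Fin n)) (σ η : ℝ)
    (hf : DifferentiableAt ℝ f x) (hH : SymmCLM H)
    (hψconv : ConvexE ψ) (hψproper : ProperPsi ψ) (hψclosed : ClosedPsi ψ)
    (hdom : ψ x ≠ ⊤)
    (hσ : 0 < σ) (hσH : ∀ e : EuclideanSpace ℝ (Fin n), σ * ‖e‖ ^ 2 ≤ ⟪H e, e⟫)
    (hη0 : 0 ≤ η) (hη1 : η < 1)
    (happrox : Qm f ψ H x d ≤ ((1 - η : ℝ) : EReal) * ⨅ e, Qm f ψ H x e) :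
    Dm f ψ x d ≤ ((-(1 / (1 + Real.sqrt η)) * ⟪H d, d⟫ : ℝ) : EReal) ∧
      -(1 / (1 + Real.sqrt η)) * ⟪H d, d⟫ ≤ -(σ / (1 + Real.sqrt η)) * ‖d‖ ^ 2 := by
  obtain ⟨hbot, -⟩ := hψproper
  -- ψ x is real
  obtain ⟨px, hpx⟩ : ∃ p : ℝ, ψ x = (p : ℝ) := by
    lift ψ x to ℝ using ⟨hdom, hbot x⟩ with p
    exact ⟨p, rfl⟩
  set g := gradient f x with hg
  set a := ⟪H d, d⟫ with hadef
  have ha : 0 ≤ a := le_trans (by positivity) (hσH d)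
  have h1η : (0:ℝ) < 1 - η := by linarith
  -- Q(0) = 0
  have hQ0 : Qm f ψ H x 0 = 0 := by
    simp only [Qm, hpx, inner_zero_right, map_zero, inner_zero_left, mul_zero, add_zero]
    rw [← EReal.coe_zero, ← EReal.coe_add, ← EReal.coe_sub]
    norm_num
  set Qs := ⨅ e, Qm f ψ H x e with hQsdef
  have hQsle : Qs ≤ 0 := hQ0 ▸ iInf_le _ 0
  -- Qs is not ⊥
  have hQsbot : Qs ≠ ⊥ := by
    intro hb
    rw [hb, EReal.mul_bot_of_pos (by exact_mod_cast h1η), le_bot_iff] at happrox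
    have : Qm f ψ H x d ≠ ⊥ := by
      rw [Qm, hpx]
      exact form_ne_bot _ _ _ (hbot _)
    exact this happrox
  have hQstop : Qs ≠ ⊤ := fun h => by simp [h] at hQsle
  obtain ⟨qs, hqs⟩ : ∃ q : ℝ, Qs = (q : ℝ) := by
    lift Qs to ℝ using ⟨hQstop, hQsbot⟩ with q
    exact ⟨q, rfl⟩
  have hqs0 : qs ≤ 0 := by rwa [hqs, ← EReal.coe_zero, EReal.coe_le_coe_iff] at hQsle
  rw [hqs, ← EReal.coe_mul] at happrox
  -- ψ (x + d) is real
  obtain ⟨q, hq⟩ : ∃ p : ℝ, ψ (x + d) = (p : ℝ) := by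
    have htop : ψ (x + d) ≠ ⊤ := by
      intro ht
      rw [Qm, hpx, ht, form_top] at happrox
      exact absurd happrox (not_le.mpr (EReal.coe_lt_top _))
    lift ψ (x + d) to ℝ using ⟨htop, hbot _⟩ with p
    exact ⟨p, rfl⟩
  set D := ⟪g, d⟫ + q - px with hD
  -- the main real inequality from happrox
  have hQd : Qm f ψ H x d = ((D + a / 2 : ℝ) : EReal) := by
    rw [Qm, hpx, hq, ← EReal.coe_add, ← EReal.coe_sub]
    exact EReal.coe_eq_coe_iff.mpr (by rw [hD]; ring)
  have hmain : D + a / 2 ≤ (1 - η) * qs := by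
    rw [hQd, EReal.coe_le_coe_iff] at happrox
    exact happrox
  -- the key bound on qs via convexity
  have hkey : ∀ t : ℝ, 0 ≤ t → t ≤ 1 → qs ≤ t * D + t ^ 2 * (a / 2) := by
    intro t ht0 ht1
    have hconv := hψconv x (x + d) (1 - t) t (by linarith) ht0 (by ring)
    have hpt : (1 - t) • x + t • (x + d) = x + t • d := by
      rw [smul_add, ← add_assoc, ← add_smul]
      norm_num
    rw [hpt, hpx, hq, ← EReal.coe_mul, ← EReal.coe_mul, ← EReal.coe_add] at hconv
    have hQt : Qm f ψ H x (t • d) ≤ ((t * D + t ^ 2 * (a / 2) : ℝ) : EReal) := by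
      rw [Qm, hpx]
      have hip : ⟪g, t • d⟫ + 1 / 2 * ⟪H (t • d), t • d⟫
          = t * ⟪g, d⟫ + t ^ 2 * (a / 2) := by
        rw [map_smul, real_inner_smul_right, real_inner_smul_left, real_inner_smul_right]
        ring
      rw [hip]
      calc ((t * ⟪g, d⟫ + t ^ 2 * (a / 2) : ℝ) : EReal) + ψ (x + t • d) - (px : EReal)
          ≤ ((t * ⟪g, d⟫ + t ^ 2 * (a / 2) : ℝ) : EReal)
              + (((1 - t) * px + t * q : ℝ) : EReal) - (px : EReal) :=
            EReal.sub_le_sub (add_le_add le_rfl hconv) le_rfl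
        _ = ((t * D + t ^ 2 * (a / 2) : ℝ) : EReal) := by
            rw [← EReal.coe_add, ← EReal.coe_sub]
            exact EReal.coe_eq_coe_iff.mpr (by rw [hD]; ring)
    have : Qs ≤ ((t * D + t ^ 2 * (a / 2) : ℝ) : EReal) := le_trans (iInf_le _ (t • d)) hQt
    rwa [hqs, EReal.coe_le_coe_iff] at this
  have hkey' : ∀ t : ℝ, 0 ≤ t → t ≤ 1 → D + a / 2 ≤ (1 - η) * (t * D + t ^ 2 * (a / 2)) := by
    intro t ht0 ht1
    exact le_trans hmain (mul_le_mul_of_nonneg_left (hkey t ht0 ht1) h1η.le)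
  have hDb := real_core D a η ha hη0 hη1 hkey'
  constructor
  · have hDm : Dm f ψ x d = ((D : ℝ) : EReal) := by
      rw [Dm, hpx, hq, ← EReal.coe_add, ← EReal.coe_sub, hD]
    rw [hDm, EReal.coe_le_coe_iff]
    exact hDb
  · have hs0 : 0 ≤ Real.sqrt η := Real.sqrt_nonneg η
    have h1s : (0:ℝ) < 1 + Real.sqrt η := by linarith
    have hkey2 := hσH d
    rw [← hadef] at hkey2
    have h2 : σ * ‖d‖ ^ 2 / (1 + Real.sqrt η) ≤ a / (1 + Real.sqrt η) := by gcongr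
    have e1 : -(1 / (1 + Real.sqrt η)) * a = -(a / (1 + Real.sqrt η)) := by ring
    have e2 : -(σ / (1 + Real.sqrt η)) * ‖d‖ ^ 2 = -(σ * ‖d‖ ^ 2 / (1 + Real.sqrt η)) := by
      ring
    rw [e1, e2]
    exact neg_le_neg h2
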